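/- On a W̄₃-manifold (M,P,g) of dimension 2n, the curvature tensor satisfies R(x,y,Pz,Pw) - R(x,y,z,w) = -(1/2n){(ψ₁-ψ₂)(A)(x,y,z,w) + (θ(Ω)/2n)(π₁-π₂)(x,y,z,w)}, where A(y,z) = (∇_y θ)z - (1/2n)θ(y)θ(z). -/

import Mathlib

open scoped BigOperators

/-- An abstract (local) model of a Riemannian almost product manifold of
dimension `n`: `V` plays the role of the module of smooth vector fields over
the commutative ℝ-algebra `C` of smooth functions, `g` is the Riemannian
metric, `P` the almost product structure, `D` the directional derivative of
functions, `bracket` the Lie bracket of vector fields, `nabla` the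
Levi-Civita connection of `g`, and `e`, `e'` a frame together with its
`g`-reciprocal frame (used to form traces `g^{ij}·`). -/
structure RAPM (n : ℕ) where
  V : Type
  C : Type
  [instAG : AddCommGroup V]
  [instCR : CommRing C]
  [instAlg : Algebra ℝ C]
  [instMod : Module C V]
  g : V →ₗ[C] V →ₗ[C] C
  P : V →ₗ[C] V
  gSymm : ∀ x y, g x y = g y x
  Pinvol : ∀ x, P (P x) = x
  Piso : ∀ x y, g (P x) (P y) = g x y
  D : V → C → C
  Dadd : ∀ x f h, D x (f + h) = D x f + D x h
  bracket : V → V → V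
  bracketD : ∀ x y f, D (bracket x y) f = D x (D y f) - D y (D x f)
  jacobi : ∀ x y z,
    bracket x (bracket y z) + bracket y (bracket z x) + bracket z (bracket x y) = 0
  nabla : V → V → V
  nabla_add₁ : ∀ x y z, nabla (x + y) z = nabla x z + nabla y z
  nabla_smul₁ : ∀ (f : C) x y, nabla (f • x) y = f • nabla x y
  nabla_add₂ : ∀ x y z, nabla x (y + z) = nabla x y + nabla x z
  nabla_leibniz : ∀ x (f : C) y, nabla x (f • y) = D x f • y + f • nabla x y
  nabla_metric : ∀ x y z, D x (g y z) = g (nabla x y) z + g y (nabla x z)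
  torsion_free : ∀ x y, nabla x y - nabla y x = bracket x y
  e : Fin n → V
  e' : Fin n → V
  dual_frame : ∀ i j, g (e' i) (e j) = if i = j then 1 else 0
  frame_span : ∀ v : V, v = ∑ i, g (e' i) v • e i

namespace RAPM

attribute [instance] RAPM.instAG RAPM.instCR RAPM.instAlg RAPM.instMod

variable {n : ℕ} (Q : RAPM n)

/-- The fundamental tensor `F(x,y,z) = g((∇ₓP)y, z)`. -/
def F (x y z : Q.V) : Q.C := Q.g (Q.nabla x (Q.P y) - Q.P (Q.nabla x y)) z

/-- The curvature operator `R(x,y)z`. -/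
def R (x y z : Q.V) : Q.V :=
  Q.nabla x (Q.nabla y z) - Q.nabla y (Q.nabla x z) - Q.nabla (Q.bracket x y) z

/-- The (0,4) curvature tensor `R(x,y,z,w) = g(R(x,y)z, w)`. -/
def Rm (x y z w : Q.V) : Q.C := Q.g (Q.R x y z) w

/-- `tr P = g^{ij} g(e_i, P e_j)`. -/
def trP : Q.C := ∑ i, Q.g (Q.e' i) (Q.P (Q.e i))

/-- The Lee form `θ(x) = g^{ij} F(e_i, e_j, x)`. -/
def theta (x : Q.V) : Q.C := ∑ i, Q.F (Q.e' i) (Q.e i) x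

/-- The covariant derivative `(∇ₓθ)y`. -/
def nablaTheta (x y : Q.V) : Q.C := Q.D x (Q.theta y) - Q.theta (Q.nabla x y)

/-- `θ` is closed iff `(∇ₓθ)y = (∇_yθ)x`. -/
def closed : Prop := ∀ x y, Q.nablaTheta x y = Q.nablaTheta y x

/-- The covariant derivative `(∇ₓF)(y,z,w)`. -/
def nablaF (x y z w : Q.V) : Q.C :=
  Q.D x (Q.F y z w) - Q.F (Q.nabla x y) z w - Q.F y (Q.nabla x z) w
    - Q.F y z (Q.nabla x w)

def psi1 (S : Q.V → Q.V → Q.C) (x y z w : Q.V) : Q.C :=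
  Q.g y z * S x w - Q.g x z * S y w + S y z * Q.g x w - S x z * Q.g y w

def psi2 (S : Q.V → Q.V → Q.C) (x y z w : Q.V) : Q.C :=
  Q.psi1 S x y (Q.P z) (Q.P w)

/-- The associated metric `g̃(x,y) = g(x,Py)`. -/
def gP (x y : Q.V) : Q.C := Q.g x (Q.P y)

noncomputable def pi1 (x y z w : Q.V) : Q.C :=
  ((1 : ℝ)/2) • Q.psi1 (fun a b => Q.g a b) x y z w

noncomputable def pi2 (x y z w : Q.V) : Q.C :=
  ((1 : ℝ)/2) • Q.psi2 (fun a b => Q.g a b) x y z w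

def pi3 (x y z w : Q.V) : Q.C := Q.psi1 Q.gP x y z w

/-- The Ricci tensor `ρ(L)(y,z) = g^{ij} L(e_i,y,z,e_j)` of a (0,4)-tensor. -/
def ric (L : Q.V → Q.V → Q.V → Q.V → Q.C) (y z : Q.V) : Q.C :=
  ∑ i, L (Q.e' i) y z (Q.e i)

/-- The scalar curvature `τ(L) = g^{ij} ρ(L)(e_i,e_j)`. -/
def scal (L : Q.V → Q.V → Q.V → Q.V → Q.C) : Q.C := ∑ i, Q.ric L (Q.e i) (Q.e' i)

/-- The associated Ricci tensor `ρ*(L)(y,z) = g^{ij} L(e_i,y,z,Pe_j)`. -/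
def ricStar (L : Q.V → Q.V → Q.V → Q.V → Q.C) (y z : Q.V) : Q.C :=
  ∑ i, L (Q.e' i) y z (Q.P (Q.e i))

/-- The associated scalar curvature `τ*(L)`. -/
def scalStar (L : Q.V → Q.V → Q.V → Q.V → Q.C) : Q.C :=
  ∑ i, Q.ricStar L (Q.e i) (Q.e' i)

/-- The trace `g^{ij} S(e_i,e_j)` of a (0,2)-tensor. -/
def trB (S : Q.V → Q.V → Q.C) : Q.C := ∑ i, S (Q.e i) (Q.e' i)

/-- The divergence of a vector field. -/
def divg (v : Q.V) : Q.C := ∑ i, Q.g (Q.e' i) (Q.nabla (Q.e i) v)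

/-- A curvature-like tensor. -/
def curvatureLike (L : Q.V → Q.V → Q.V → Q.V → Q.C) : Prop :=
  (∀ x y z w, L x y z w = - L y x z w) ∧
  (∀ x y z w, L x y z w = - L x y w z) ∧
  (∀ x y z w, L x y z w + L y z x w + L z x y w = 0)

/-- A Riemannian P-tensor. -/
def isPtensor (L : Q.V → Q.V → Q.V → Q.V → Q.C) : Prop :=
  Q.curvatureLike L ∧ ∀ x y z w, L x y (Q.P z) (Q.P w) = L x y z w

/-- The defining condition of the Naveira class `W̄₃` (dimension `n`, so the
factor `1/(2n)` of the paper is `1/n` here). -/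
def W3 : Prop :=
  (∀ x y z, Q.F x y z =
    ((1 : ℝ)/(n : ℝ)) • ((Q.g x y + Q.g x (Q.P y)) * Q.theta z +
      (Q.g x z + Q.g x (Q.P z)) * Q.theta y)) ∧
  (∀ x, Q.theta (Q.P x) = - Q.theta x)

/-- The defining condition of the Naveira class `W̄₆`. -/
def W6 : Prop :=
  (∀ x y z, Q.F x y z =
    ((1 : ℝ)/(n : ℝ)) • ((Q.g x y - Q.g x (Q.P y)) * Q.theta z +
      (Q.g x z - Q.g x (Q.P z)) * Q.theta y)) ∧
  (∀ x, Q.theta (Q.P x) = Q.theta x)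

end RAPM

open RAPM in
/-- On a `W̄₃`-manifold of dimension `2n`:
`R(x,y,Pz,Pw) - R(x,y,z,w)
  = -(1/2n){(ψ₁-ψ₂)(A) + (θ(Ω)/2n)(π₁-π₂)}`. -/
theorem statement9 {n : ℕ} (hn : 0 < n) (Q : RAPM (2*n)) (htr : Q.trP = 0)
    (hW : Q.W3) (Ω : Q.V) (hΩ : ∀ x, Q.g Ω x = Q.theta x)
    (A : Q.V → Q.V → Q.C)
    (hA : ∀ y z, A y z =
      Q.nablaTheta y z - ((1 : ℝ)/(2*(n : ℝ))) • (Q.theta y * Q.theta z)) :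
    ∀ x y z w, Q.Rm x y (Q.P z) (Q.P w) - Q.Rm x y z w =
      - (((1 : ℝ)/(2*(n : ℝ))) •
        (Q.psi1 A x y z w - Q.psi2 A x y z w +
          ((1 : ℝ)/(2*(n : ℝ))) •
            (Q.theta Ω * (Q.pi1 x y z w - Q.pi2 x y z w)))) := by
  intro x y z w
  have hn' : (n:ℝ) ≠ 0 := Nat.cast_ne_zero.mpr hn.ne'
  set kC : Q.C := algebraMap ℝ Q.C ((1:ℝ)/(2*(n:ℝ))) with hkC
  have hsm : ∀ c : Q.C, ((1:ℝ)/(2*(n:ℝ))) • c = kC * c := by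
    intro c; rw [Algebra.smul_def, ← hkC]
  have hsm' : ∀ c : Q.C, ((1:ℝ)/((2*n : ℕ) : ℝ)) • c = kC * c := by
    intro c
    rw [show ((1:ℝ)/((2*n : ℕ) : ℝ)) = (1:ℝ)/(2*(n:ℝ)) by push_cast; ring]
    exact hsm c
  -- basic g lemmas
  have hswap : ∀ a b : Q.V, Q.g a (Q.P b) = Q.g b (Q.P a) := by
    intro a b
    have h1 := Q.Piso a (Q.P b)
    rw [Q.Pinvol b] at h1
    rw [← h1, Q.gSymm]
  have hθ : ∀ v : Q.V, Q.theta v = Q.g Ω v := fun v => (hΩ v).symm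
  have hθP : ∀ v : Q.V, Q.theta (Q.P v) = - Q.theta v := hW.2
  -- F expansion
  have hF : ∀ a b c : Q.V, Q.F a b c =
      kC * ((Q.g a b + Q.g a (Q.P b)) * Q.theta c +
        (Q.g a c + Q.g a (Q.P c)) * Q.theta b) := by
    intro a b c; rw [hW.1 a b c, hsm']
  -- D lemmas
  have hD0 : ∀ a : Q.V, Q.D a 0 = 0 := by
    intro a
    have h := Q.Dadd a 0 0
    rw [add_zero] at h
    exact (left_eq_add.mp h)
  have hDneg : ∀ (a : Q.V) (c : Q.C), Q.D a (-c) = - Q.D a c := by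
    intro a c
    have h2 : Q.D a c + Q.D a (-c) = 0 := by
      rw [← Q.Dadd, add_neg_cancel]; exact hD0 a
    exact eq_neg_of_add_eq_zero_right h2
  have hD1 : ∀ a : Q.V, Q.D a 1 = 0 := by
    intro a
    have i0 : Fin (2*n) := ⟨0, by omega⟩
    have h := Q.nabla_leibniz a (1:Q.C) (Q.e i0)
    rw [one_smul, one_smul] at h
    have h2 : Q.D a 1 • Q.e i0 = 0 := (right_eq_add.mp h)
    have h3 := congrArg (fun v => Q.g (Q.e' i0) v) h2
    simp only [map_smul, map_zero, smul_eq_mul, Q.dual_frame] at h3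
    simpa using h3
  have hDk : ∀ a : Q.V, Q.D a kC = 0 := by
    intro a
    have hsum : ((2*n : ℕ) : Q.C) * kC = 1 := by
      rw [(map_natCast (algebraMap ℝ Q.C) (2*n)).symm,
        hkC, ← map_mul, show ((2*n:ℕ):ℝ) * ((1:ℝ)/(2*(n:ℝ))) = 1 by
          push_cast; field_simp, map_one]
    have hDnsmul : ∀ (m:ℕ) (c : Q.C), Q.D a (m • c) = m • Q.D a c := by
      intro m c
      induction m with
      | zero => simpa using hD0 a
      | succ k ih => rw [succ_nsmul, succ_nsmul, Q.Dadd, ih]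
    have h : (2*n) • Q.D a kC = 0 := by
      rw [← hDnsmul, show (2*n) • kC = (1:Q.C) by rw [nsmul_eq_mul, hsum]]
      exact hD1 a
    have h2 : ((2*n:ℕ):ℝ) • Q.D a kC = 0 := by
      rw [Nat.cast_smul_eq_nsmul]; exact h
    have hne : ((2*n:ℕ):ℝ) ≠ 0 := by positivity
    have h3 : Q.D a kC = ((2*n:ℕ):ℝ)⁻¹ • (((2*n:ℕ):ℝ) • Q.D a kC) := by
      rw [smul_smul, inv_mul_cancel₀ hne, one_smul]
    rw [h3, h2, smul_zero]
  -- nondegeneracy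
  have hgeq : ∀ v v' : Q.V, (∀ u, Q.g u v = Q.g u v') → v = v' := by
    intro v v' h
    calc v = ∑ i, Q.g (Q.e' i) v • Q.e i := Q.frame_span v
    _ = ∑ i, Q.g (Q.e' i) v' • Q.e i := by
        refine Finset.sum_congr rfl fun i _ => by rw [h]
    _ = v' := (Q.frame_span v').symm
  -- the tensor ∇P
  have hPd : ∀ a b : Q.V, Q.nabla a (Q.P b) - Q.P (Q.nabla a b) =
      (Q.g a b + Q.g a (Q.P b)) • (kC • Ω) +
        Q.theta b • (kC • (a + Q.P a)) := by
    intro a b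
    apply hgeq
    intro u
    rw [Q.gSymm u (Q.nabla a (Q.P b) - Q.P (Q.nabla a b))]
    rw [show Q.g (Q.nabla a (Q.P b) - Q.P (Q.nabla a b)) u = Q.F a b u from rfl]
    rw [hF a b u]
    simp only [map_add, map_smul, smul_eq_mul]
    rw [show Q.g u Ω = Q.theta u by rw [Q.gSymm u Ω, ← hθ]]
    rw [show Q.g u (Q.P a) = Q.g a (Q.P u) from hswap u a]
    rw [Q.gSymm u a]
    ring
  have hB : ∀ a b : Q.V, Q.nablaTheta a b = Q.g (Q.nabla a Ω) b := by
    intro a b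
    simp only [RAPM.nablaTheta, hθ]
    rw [Q.nabla_metric a Ω b]
    ring
  have hBP : ∀ a b : Q.V, Q.nablaTheta a (Q.P b) =
      -(Q.nablaTheta a b) - kC * ((Q.g a b + Q.g a (Q.P b)) * Q.theta Ω) := by
    intro a b
    have h2 : ∀ v : Q.V, Q.g Ω (Q.P v) = -(Q.g Ω v) := by
      intro v; rw [← hθ (Q.P v), hθP v, hθ v]
    have h1 := Q.nabla_metric a Ω (Q.P b)
    have h3 : Q.D a (Q.g Ω (Q.P b)) = -(Q.g (Q.nabla a Ω) b + Q.g Ω (Q.nabla a b)) := by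
      rw [h2 b, hDneg a, Q.nabla_metric a Ω b]
    have h4 : Q.F a b Ω = Q.g Ω (Q.nabla a (Q.P b)) - Q.g Ω (Q.P (Q.nabla a b)) := by
      simp only [RAPM.F, map_sub, LinearMap.sub_apply]
      rw [Q.gSymm (Q.nabla a (Q.P b)) Ω, Q.gSymm (Q.P (Q.nabla a b)) Ω]
    have h5 := h2 (Q.nabla a b)
    have h6 : Q.F a b Ω = kC * ((Q.g a b + Q.g a (Q.P b)) * Q.theta Ω) := by
      rw [hF a b Ω]
      rw [show Q.g a Ω = Q.theta a by rw [Q.gSymm a Ω, ← hθ]]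
      rw [show Q.g a (Q.P Ω) = -(Q.theta a) by rw [hswap a Ω, ← hθ (Q.P a), hθP a]]
      ring
    have h7 : Q.g (Q.nabla a Ω) (Q.P b) = -(Q.g (Q.nabla a Ω) b) - Q.F a b Ω := by
      linear_combination h3 - h1 + h4 - h5
    rw [hB a (Q.P b), hB a b, h7, h6]
  -- second covariant derivative of P under W3
  have hTv : ∀ a b c : Q.V,
      Q.nabla a (Q.nabla b (Q.P c) - Q.P (Q.nabla b c)) -
        (Q.nabla (Q.nabla a b) (Q.P c) - Q.P (Q.nabla (Q.nabla a b) c)) -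
        (Q.nabla b (Q.P (Q.nabla a c)) - Q.P (Q.nabla b (Q.nabla a c))) =
      Q.F a c b • (kC • Ω) + (Q.g b c + Q.g b (Q.P c)) • (kC • Q.nabla a Ω) +
        Q.nablaTheta a c • (kC • (b + Q.P b)) +
        Q.theta c • (kC • (Q.nabla a (Q.P b) - Q.P (Q.nabla a b))) := by
    intro a b c
    have hk : ∀ v : Q.V, Q.nabla a (kC • v) = kC • Q.nabla a v := by
      intro v; rw [Q.nabla_leibniz, hDk, zero_smul, zero_add]
    rw [hPd b c, hPd (Q.nabla a b) c, hPd b (Q.nabla a c)]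
    rw [Q.nabla_add₂]
    rw [Q.nabla_leibniz a ((Q.g b c + Q.g b (Q.P c))) (kC • Ω)]
    rw [Q.nabla_leibniz a (Q.theta c) (kC • (b + Q.P b))]
    rw [hk Ω, hk (b + Q.P b), Q.nabla_add₂ a b (Q.P b)]
    rw [Q.Dadd, Q.nabla_metric a b c, Q.nabla_metric a b (Q.P c)]
    rw [show Q.D a (Q.theta c) = Q.g (Q.nabla a Ω) c + Q.g Ω (Q.nabla a c) by
      rw [hθ c]; exact Q.nabla_metric a Ω c]
    rw [show Q.theta (Q.nabla a c) = Q.g Ω (Q.nabla a c) from hθ _]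
    rw [show Q.F a c b = Q.g b (Q.nabla a (Q.P c)) - Q.g b (Q.P (Q.nabla a c)) by
      simp only [RAPM.F, map_sub, LinearMap.sub_apply]
      rw [Q.gSymm (Q.nabla a (Q.P c)) b, Q.gSymm (Q.P (Q.nabla a c)) b]]
    rw [hB a c]
    match_scalars <;> ring
  -- nablaF in terms of the second covariant derivative of P
  have hnFv : ∀ a b c d : Q.V, Q.nablaF a b c d =
      Q.g (Q.nabla a (Q.nabla b (Q.P c) - Q.P (Q.nabla b c)) -
        (Q.nabla (Q.nabla a b) (Q.P c) - Q.P (Q.nabla (Q.nabla a b) c)) -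
        (Q.nabla b (Q.P (Q.nabla a c)) - Q.P (Q.nabla b (Q.nabla a c)))) d := by
    intro a b c d
    simp only [RAPM.nablaF, RAPM.F]
    rw [Q.nabla_metric a (Q.nabla b (Q.P c) - Q.P (Q.nabla b c)) d]
    simp only [map_sub, LinearMap.sub_apply]
    ring
  -- the explicit formula for nablaF on a W3 manifold
  have hnF : ∀ a b c d : Q.V, Q.nablaF a b c d =
      kC * (Q.F a c b * Q.theta d +
        (Q.g b c + Q.g b (Q.P c)) * Q.nablaTheta a d +
        Q.nablaTheta a c * (Q.g b d + Q.g b (Q.P d)) +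
        Q.theta c * Q.F a b d) := by
    intro a b c d
    rw [hnFv a b c d, hTv a b c]
    simp only [map_add, map_smul, LinearMap.add_apply, LinearMap.smul_apply,
      smul_eq_mul, map_sub, LinearMap.sub_apply]
    rw [← hθ d, ← hB a d]
    rw [Q.gSymm (Q.P b) d, hswap d b]
    rw [show Q.F a b d = Q.g (Q.nabla a (Q.P b)) d - Q.g (Q.P (Q.nabla a b)) d by
      simp only [RAPM.F, map_sub, LinearMap.sub_apply]]
    ring
  -- the Ricci identity
  have hsub1 : ∀ u v w' : Q.V, Q.nabla (u - v) w' = Q.nabla u w' - Q.nabla v w' := by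
    intro u v w'
    rw [sub_eq_add_neg, Q.nabla_add₁,
      show Q.nabla (-v) w' = - Q.nabla v w' by
        rw [show -v = (-1:Q.C) • v from (neg_one_smul Q.C v).symm,
          Q.nabla_smul₁, neg_one_smul],
      ← sub_eq_add_neg]
  have hsub2 : ∀ u v w' : Q.V, Q.nabla u (v - w') = Q.nabla u v - Q.nabla u w' := by
    intro u v w'
    rw [sub_eq_add_neg, Q.nabla_add₂,
      show Q.nabla u (-w') = - Q.nabla u w' by
        rw [show -w' = (-1:Q.C) • w' from (neg_one_smul Q.C w').symm,
          Q.nabla_leibniz, show Q.D u (-1 : Q.C) = 0 by rw [hDneg, hD1, neg_zero],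
          zero_smul, zero_add, neg_one_smul],
      ← sub_eq_add_neg]
  have hΔ : ∀ a b c : Q.V,
      (Q.nabla a (Q.nabla b (Q.P c) - Q.P (Q.nabla b c)) -
        (Q.nabla (Q.nabla a b) (Q.P c) - Q.P (Q.nabla (Q.nabla a b) c)) -
        (Q.nabla b (Q.P (Q.nabla a c)) - Q.P (Q.nabla b (Q.nabla a c)))) -
      (Q.nabla b (Q.nabla a (Q.P c) - Q.P (Q.nabla a c)) -
        (Q.nabla (Q.nabla b a) (Q.P c) - Q.P (Q.nabla (Q.nabla b a) c)) -
        (Q.nabla a (Q.P (Q.nabla b c)) - Q.P (Q.nabla a (Q.nabla b c)))) =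
      Q.R a b (Q.P c) - Q.P (Q.R a b c) := by
    intro a b c
    simp only [RAPM.R]
    rw [← Q.torsion_free a b]
    simp only [hsub1, hsub2, map_sub]
    abel
  have haveA : ∀ a b c d : Q.V,
      Q.Rm a b (Q.P c) (Q.P d) - Q.Rm a b c d =
        Q.nablaF a b c (Q.P d) - Q.nablaF b a c (Q.P d) := by
    intro a b c d
    have h := congrArg (fun v => Q.g v (Q.P d)) (hΔ a b c)
    simp only [map_sub, LinearMap.sub_apply] at h
    rw [Q.Piso (Q.R a b c) d] at h
    simp only [RAPM.Rm]
    rw [hnFv a b c (Q.P d), hnFv b a c (Q.P d)]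
    simp only [map_sub, LinearMap.sub_apply]
    linear_combination -h
  -- pi formulas
  have hpi1 : Q.pi1 x y z w = Q.g y z * Q.g x w - Q.g x z * Q.g y w := by
    simp only [RAPM.pi1, RAPM.psi1]
    rw [show Q.g y z * Q.g x w - Q.g x z * Q.g y w + Q.g y z * Q.g x w -
        Q.g x z * Q.g y w = (2:ℝ) • (Q.g y z * Q.g x w - Q.g x z * Q.g y w) by
      rw [two_smul]; ring]
    rw [smul_smul]
    norm_num
  have hpi2 : Q.pi2 x y z w =
      Q.g y (Q.P z) * Q.g x (Q.P w) - Q.g x (Q.P z) * Q.g y (Q.P w) := by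
    simp only [RAPM.pi2, RAPM.psi2, RAPM.psi1]
    rw [show Q.g y (Q.P z) * Q.g x (Q.P w) - Q.g x (Q.P z) * Q.g y (Q.P w) +
        Q.g y (Q.P z) * Q.g x (Q.P w) - Q.g x (Q.P z) * Q.g y (Q.P w) =
        (2:ℝ) • (Q.g y (Q.P z) * Q.g x (Q.P w) - Q.g x (Q.P z) * Q.g y (Q.P w)) by
      rw [two_smul]; ring]
    rw [smul_smul]
    norm_num
  have hA' : ∀ a b : Q.V, A a b = Q.nablaTheta a b - kC * (Q.theta a * Q.theta b) := by
    intro a b; rw [hA a b, hsm]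
  -- assemble
  rw [haveA x y z w, hnF x y z (Q.P w), hnF y x z (Q.P w)]
  simp only [RAPM.psi1, RAPM.psi2]
  rw [hpi1, hpi2]
  simp only [hA']
  rw [hF x z y, hF x y (Q.P w), hF y z x, hF y x (Q.P w)]
  rw [Q.Pinvol w]
  rw [hθP w, hθP z]
  rw [hBP x w, hBP y w, hBP x z, hBP y z]
  rw [Q.gSymm y x, hswap y x]
  simp only [hsm]
  ring
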